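/- arXiv:1705.09316 — 3 statements merged into one kernel-verified Lean document; each statement's English description precedes it below -/
import Mathlib

section
/- Let X be Gaussian with mean λ₁ and standard deviation λ₂ ≥ 0, p ∈ (0.5, 1), and suppose λ₂ᵘ ≥ λ₂. If λ₁ + F⁻¹(p)·λ₂ᵘ ≤ 0, then P(X ≤ 0) ≥ p. -/
open MeasureTheory ProbabilityTheory

/-- The quantile function (generalized inverse of the CDF) of the standard normal
distribution `N(0,1)`. -/
noncomputable def stdNormalQuantile (p : ℝ) : ℝ :=
  sInf {x : ℝ | p ≤ cdf (gaussianReal 0 1) x}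

lemma stdGaussian_map_neg :
    (gaussianReal 0 1).map (fun x => -x) = gaussianReal 0 1 := by
  have h := gaussianReal_map_const_mul (μ := 0) (v := 1) (-1)
  simp only [neg_one_mul, mul_zero] at h
  convert h using 2
  ext
  norm_num

lemma std_cdf_zero : cdf (gaussianReal 0 1) 0 = 1/2 := by
  have hzero : gaussianReal 0 1 {0} = 0 := by
    have := gaussianReal_absolutelyContinuous (0 : ℝ) (v := 1) one_ne_zero
    exact this (by simp)
  have hIci : gaussianReal 0 1 (Set.Iic 0) = gaussianReal 0 1 (Set.Ici 0) := by
    have h := stdGaussian_map_neg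
    calc gaussianReal 0 1 (Set.Iic 0)
        = ((gaussianReal 0 1).map (fun x => -x)) (Set.Iic 0) := by rw [h]
      _ = gaussianReal 0 1 ((fun x : ℝ => -x) ⁻¹' Set.Iic 0) :=
          Measure.map_apply measurable_neg measurableSet_Iic
      _ = gaussianReal 0 1 (Set.Ici 0) := by
          congr 1
          ext x
          simp
  have hIoi : gaussianReal 0 1 (Set.Ici 0) = gaussianReal 0 1 (Set.Ioi 0) := by
    have heq : (Set.Ici (0:ℝ)) = {0} ∪ Set.Ioi 0 := by
      ext x; simp [le_iff_lt_or_eq, or_comm, eq_comm]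
    rw [heq, measure_union (Set.disjoint_singleton_left.mpr (by simp)) measurableSet_Ioi,
      hzero, zero_add]
  have hsum : gaussianReal 0 1 (Set.Iic 0) + gaussianReal 0 1 (Set.Ioi 0) = 1 := by
    rw [← measure_union (Set.Iic_disjoint_Ioi le_rfl) measurableSet_Ioi,
      Set.Iic_union_Ioi, measure_univ]
  have hdouble : gaussianReal 0 1 (Set.Iic 0) + gaussianReal 0 1 (Set.Iic 0) = 1 := by
    rw [hIci, hIoi] at hsum ⊢
    exact hsum
  have hne : gaussianReal 0 1 (Set.Iic 0) ≠ ⊤ := measure_ne_top _ _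
  have h2 := congrArg ENNReal.toReal hdouble
  rw [ENNReal.toReal_add hne hne, ENNReal.toReal_one] at h2
  rw [cdf_eq_real, measureReal_def]
  linarith

lemma std_quantile_set_nonempty {p : ℝ} (hp1 : p < 1) :
    {x : ℝ | p ≤ cdf (gaussianReal 0 1) x}.Nonempty := by
  have h := (tendsto_cdf_atTop (gaussianReal 0 1)).eventually_const_le hp1
  exact h.exists

lemma std_quantile_nonneg {p : ℝ} (hp : 1/2 < p) (hp1 : p < 1) :
    0 ≤ stdNormalQuantile p := by
  apply le_csInf (std_quantile_set_nonempty hp1)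
  intro x hx
  by_contra hlt
  push_neg at hlt
  have h : cdf (gaussianReal 0 1) x ≤ cdf (gaussianReal 0 1) 0 :=
    monotone_cdf _ hlt.le
  rw [std_cdf_zero] at h
  exact absurd (Set.mem_setOf_eq ▸ hx |>.trans h) (not_le.mpr hp)

lemma std_quantile_mem {p : ℝ} (hp : 1/2 < p) (hp1 : p < 1) :
    p ≤ cdf (gaussianReal 0 1) (stdNormalQuantile p) := by
  set q := stdNormalQuantile p with hq
  have hne := std_quantile_set_nonempty hp1
  have key : ∀ x, q < x → p ≤ cdf (gaussianReal 0 1) x := by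
    intro x hx
    obtain ⟨s, hsS, hs⟩ := exists_lt_of_csInf_lt hne hx
    exact le_trans hsS (monotone_cdf _ hs.le)
  have hrc : Filter.Tendsto (cdf (gaussianReal 0 1)) (nhdsWithin q (Set.Ioi q))
      (nhds (cdf (gaussianReal 0 1) q)) :=
    ((cdf (gaussianReal 0 1)).right_continuous q).tendsto.mono_left
      (nhdsWithin_mono _ Set.Ioi_subset_Ici_self)
  refine ge_of_tendsto hrc ?_
  exact eventually_nhdsWithin_of_forall (fun x hx => key x hx)

theorem gaussian_chance_constraint_under_approx_high_p
    {Ω : Type*} [MeasurableSpace Ω] (P : Measure Ω) [IsProbabilityMeasure P]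
    (X : Ω → ℝ) (lam1 lam2 lam2u p : ℝ) (hlam2 : 0 ≤ lam2)
    (hp : p ∈ Set.Ioo (0.5 : ℝ) 1)
    (hX : Measure.map X P = gaussianReal lam1 ⟨lam2 ^ 2, sq_nonneg lam2⟩)
    (hub : lam2 ≤ lam2u)
    (hsat : lam1 + stdNormalQuantile p * lam2u ≤ 0) :
    p ≤ (P {ω | X ω ≤ 0}).toReal := by
  obtain ⟨hp2, hp1⟩ := hp
  have hp2' : 1/2 < p := by norm_num at hp2 ⊢; linarith
  set q := stdNormalQuantile p with hqdef
  have hq0 : 0 ≤ q := std_quantile_nonneg hp2' hp1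
  have hsat' : lam1 + q * lam2 ≤ 0 :=
    le_trans (by nlinarith [mul_le_mul_of_nonneg_left hub hq0]) hsat
  -- X is a.e.-measurable
  have hXae : AEMeasurable X P := by
    by_contra h
    rw [Measure.map_of_not_aemeasurable h] at hX
    have : (gaussianReal lam1 ⟨lam2 ^ 2, sq_nonneg lam2⟩) Set.univ = 1 :=
      @measure_univ _ _ _ (instIsProbabilityMeasureGaussianReal lam1 _)
    rw [← hX] at this
    simp at this
  have hmeas : P {ω | X ω ≤ 0} = gaussianReal lam1 ⟨lam2 ^ 2, sq_nonneg lam2⟩ (Set.Iic 0) := by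
    rw [← hX, Measure.map_apply_of_aemeasurable hXae measurableSet_Iic]
    rfl
  rw [hmeas]
  rcases eq_or_lt_of_le hlam2 with hz | hpos
  · -- degenerate case lam2 = 0
    have hl1 : lam1 ≤ 0 := by nlinarith
    have hv : (⟨lam2 ^ 2, sq_nonneg lam2⟩ : NNReal) = 0 := by
      ext; simp [← hz]
    rw [(congrArg (gaussianReal lam1) hv).trans (gaussianReal_zero_var lam1), Measure.dirac_apply' _ measurableSet_Iic]
    simp [Set.indicator_of_mem (Set.mem_Iic.mpr hl1)]
    exact hp1.le
  · -- nondegenerate case lam2 > 0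
    have hmap : gaussianReal lam1 ⟨lam2 ^ 2, sq_nonneg lam2⟩
        = (gaussianReal 0 1).map (fun x => lam2 * x + lam1) := by
      have h1 : (gaussianReal 0 1).map (fun x => lam2 * x)
          = gaussianReal 0 ⟨lam2 ^ 2, sq_nonneg lam2⟩ := by
        have := gaussianReal_map_const_mul (μ := 0) (v := 1) lam2
        simp at this; exact this
      have h2 : ((gaussianReal 0 1).map (fun x => lam2 * x)).map (fun x => x + lam1)
          = (gaussianReal 0 1).map (fun x => lam2 * x + lam1) := by
        rw [Measure.map_map (measurable_add_const lam1) (measurable_const_mul lam2)]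
        rfl
      rw [← h2, h1]
      have := gaussianReal_map_add_const (μ := 0) (v := ⟨lam2 ^ 2, sq_nonneg lam2⟩) lam1
      rw [this, zero_add]
    rw [hmap, Measure.map_apply (by fun_prop) measurableSet_Iic]
    have hpre : (fun x => lam2 * x + lam1) ⁻¹' Set.Iic 0 = Set.Iic (-lam1 / lam2) := by
      ext x
      simp only [Set.mem_preimage, Set.mem_Iic]
      rw [le_div_iff₀ hpos]
      constructor <;> intro <;> nlinarith
    rw [hpre]
    have hqle : q ≤ -lam1 / lam2 := by
      rw [le_div_iff₀ hpos]
      nlinarith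
    have hcdf : p ≤ cdf (gaussianReal 0 1) (-lam1 / lam2) :=
      le_trans (std_quantile_mem hp2' hp1) (monotone_cdf _ hqle)
    rw [cdf_eq_real] at hcdf; exact hcdf
end

section
/- For contracts C₁ = (A₁, G₁) and C₂ = (A₂, G₂) in canonical form, C₁ ⪯ C₂ holds if and only if the implications A₂ → A₁ and G₁ → G₂ hold as set inclusions: A₂ ⊆ A₁ and G₁ ⊆ G₂; moreover, under canonical form, G₁ ⊆ G₂ is equivalent to (A₁ ∩ G₁ᶜ) ∪ G₂ ∪ A₂ᶜ = B. -/
/-- Refinement of assume-guarantee contracts `(A, G)` over a behavior set `B`: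
`(A, G) ⪯ (A', G')` iff `A' ⊆ A` and `G ⊆ G'`. -/
def ContractRefines {B : Type*} (C C' : Set B × Set B) : Prop :=
  C'.1 ⊆ C.1 ∧ C.2 ⊆ C'.2

theorem refinement_canonical_iff {B : Type*} (A₁ G₁ A₂ G₂ : Set B)
    (hcan₁ : A₁ᶜ ⊆ G₁) (hcan₂ : A₂ᶜ ⊆ G₂) :
    (ContractRefines (A₁, G₁) (A₂, G₂) ↔ A₂ ⊆ A₁ ∧ G₁ ⊆ G₂) ∧
    (G₁ ⊆ G₂ ↔ (A₁ ∩ G₁ᶜ) ∪ G₂ ∪ A₂ᶜ = Set.univ) := by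
  constructor
  · exact Iff.rfl
  · constructor
    · intro h
      ext x
      simp only [Set.mem_univ, iff_true, Set.mem_union, Set.mem_inter_iff, Set.mem_compl_iff]
      by_cases hg : x ∈ G₁
      · exact Or.inl (Or.inr (h hg))
      · by_cases ha : x ∈ A₁
        · exact Or.inl (Or.inl ⟨ha, hg⟩)
        · exact absurd (hcan₁ ha) hg
    · intro h x hx
      have := h ▸ Set.mem_univ x
      rcases this with (⟨_, hg⟩ | hg2) | ha2
      · exact absurd hx hg
      · exact hg2
      · exact hcan₂ ha2
end

section
/- Define an abstract over-approximation scheme: for each formula ψ and time k, a predicate Cₖ(ψ) on signals such that for atomic predicates ((z,k) ⊨ μ) → Cₖ(μ), and extend Cₖ recursively through ∧, ∨, G_{[t₁,t₂]}, and U_{[t₁,t₂]} following the satisfaction semantics. Then for every formula ψ in negation normal form, (z,k) ⊨ ψ implies Cₖ(ψ)(z); hence if Cₖ(ψ) is unsatisfiable, ψ is unsatisfiable at time k. -/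
/-- Bounded StSTL formulas in negation normal form: (possibly negated) atomic predicates
are abstracted by `α`; the connectives are conjunction, disjunction, bounded globally and
bounded until. -/
inductive StSTL (α : Type*) where
  | atom : α → StSTL α
  | conj : StSTL α → StSTL α → StSTL α
  | disj : StSTL α → StSTL α → StSTL α
  | glob : ℤ → ℤ → StSTL α → StSTL α
  | untl : ℤ → ℤ → StSTL α → StSTL α → StSTL α

/-- Satisfaction `(z, k) ⊨ ψ` of a bounded StSTL formula over discrete-time signals,
given the satisfaction relation `satAtom` for atomic predicates. -/
def StSTL.Sat {α Sig : Type*} (satAtom : α → Sig → ℤ → Prop) :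
    StSTL α → Sig → ℤ → Prop
  | .atom a, z, k => satAtom a z k
  | .conj φ ψ, z, k => φ.Sat satAtom z k ∧ ψ.Sat satAtom z k
  | .disj φ ψ, z, k => φ.Sat satAtom z k ∨ ψ.Sat satAtom z k
  | .glob t₁ t₂ φ, z, k => ∀ i ∈ Set.Icc (k + t₁) (k + t₂), φ.Sat satAtom z i
  | .untl t₁ t₂ φ ψ, z, k =>
      ∃ i ∈ Set.Icc (k + t₁) (k + t₂),
        ψ.Sat satAtom z i ∧ ∀ j ∈ Set.Icc (k + t₁) (i - 1), φ.Sat satAtom z j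

theorem over_approximation_sound {α Sig : Type*}
    (satAtom : α → Sig → ℤ → Prop)
    (C : StSTL α → ℤ → Sig → Prop)
    (hatom : ∀ (a : α) (k : ℤ) (z : Sig), satAtom a z k → C (.atom a) k z)
    (hconj : ∀ φ ψ k z, C (.conj φ ψ) k z ↔ C φ k z ∧ C ψ k z)
    (hdisj : ∀ φ ψ k z, C (.disj φ ψ) k z ↔ C φ k z ∨ C ψ k z)
    (hglob : ∀ t₁ t₂ φ k z,
      C (.glob t₁ t₂ φ) k z ↔ ∀ i ∈ Set.Icc (k + t₁) (k + t₂), C φ i z)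
    (huntl : ∀ t₁ t₂ φ ψ k z,
      C (.untl t₁ t₂ φ ψ) k z ↔
        ∃ i ∈ Set.Icc (k + t₁) (k + t₂),
          C ψ i z ∧ ∀ j ∈ Set.Icc (k + t₁) (i - 1), C φ j z) :
    (∀ (φ : StSTL α) (z : Sig) (k : ℤ), φ.Sat satAtom z k → C φ k z) ∧
    (∀ (φ : StSTL α) (k : ℤ), (∀ z : Sig, ¬ C φ k z) → ∀ z : Sig, ¬ φ.Sat satAtom z k) := by
  have main : ∀ (φ : StSTL α) (z : Sig) (k : ℤ), φ.Sat satAtom z k → C φ k z := by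
    intro φ
    induction φ with
    | atom a => intro z k h; exact hatom a k z h
    | conj φ ψ ihφ ihψ =>
        intro z k h
        exact (hconj φ ψ k z).mpr ⟨ihφ z k h.1, ihψ z k h.2⟩
    | disj φ ψ ihφ ihψ =>
        intro z k h
        exact (hdisj φ ψ k z).mpr (h.elim (fun h => Or.inl (ihφ z k h)) (fun h => Or.inr (ihψ z k h)))
    | glob t₁ t₂ φ ih =>
        intro z k h
        exact (hglob t₁ t₂ φ k z).mpr fun i hi => ih z i (h i hi)
    | untl t₁ t₂ φ ψ ihφ ihψ =>
        intro z k h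
        obtain ⟨i, hi, hψ, hφ⟩ := h
        exact (huntl t₁ t₂ φ ψ k z).mpr ⟨i, hi, ihψ z i hψ, fun j hj => ihφ z j (hφ j hj)⟩
  exact ⟨main, fun φ k h z hs => h z (main φ z k hs)⟩
end
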